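/- Let ψ : ℝⁿ → ℝ be a convex function with ψ(x) ≥ m for all x ∈ X̄, where X̄ ⊆ ℝⁿ is a convex set, let K ⊆ ℝᵐ be a convex cone, let A : ℝⁿ → ℝᵐ be a linear map, and let b ∈ ℝᵐ. For δ ∈ ℝᵐ define the perturbed feasible set X(δ) := { x ∈ X̄ : A x − b + δ ∈ K } and, when X(δ) ≠ ∅, the perturbed value g(δ) := inf_{x ∈ X(δ)} ψ(x). Let S ⊆ ℝᵐ be a convex set and ε' > 0 be such that X(δ') ≠ ∅ for every δ' with dist(δ', S) ≤ ε', and suppose g(δ') ≤ M for every such δ'. Then g is Lipschitz on S with constant (M − m)/ε'; that is, |g(δ) − g(δ')| ≤ ((M − m)/ε')·‖δ − δ'‖ for all δ, δ' ∈ S. -/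

import Mathlib

/-- Lipschitz continuity of the perturbed optimal value of a conic
convex program.  If the perturbed program `g(δ) = inf {ψ(x) : x ∈ X̄, Ax - b + δ ∈ K}`
is feasible and its value is at most `M` for every perturbation `δ'` within
distance `ε'` of the convex set `S`, and `ψ ≥ m` on `X̄`, then `g` is Lipschitz
on `S` with constant `(M - m)/ε'`. -/
theorem perturbed_value_function_lipschitz
    {n m : ℕ}
    (ψ : EuclideanSpace ℝ (Fin n) → ℝ)
    (Xbar : Set (EuclideanSpace ℝ (Fin n)))
    (hψconv : ConvexOn ℝ Xbar ψ)
    (mlo M : ℝ) (hψlb : ∀ x ∈ Xbar, mlo ≤ ψ x)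
    (K : ConvexCone ℝ (EuclideanSpace ℝ (Fin m)))
    (A : EuclideanSpace ℝ (Fin n) →ₗ[ℝ] EuclideanSpace ℝ (Fin m))
    (b : EuclideanSpace ℝ (Fin m))
    (S : Set (EuclideanSpace ℝ (Fin m))) (hS : Convex ℝ S)
    (ε' : ℝ) (hε' : 0 < ε')
    (hfeas : ∀ δ' : EuclideanSpace ℝ (Fin m), Metric.infDist δ' S ≤ ε' →
      {x ∈ Xbar | A x - b + δ' ∈ K}.Nonempty)
    (hub : ∀ δ' : EuclideanSpace ℝ (Fin m), Metric.infDist δ' S ≤ ε' →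
      sInf (ψ '' {x ∈ Xbar | A x - b + δ' ∈ K}) ≤ M) :
    ∀ δ ∈ S, ∀ δ'' ∈ S,
      |sInf (ψ '' {x ∈ Xbar | A x - b + δ ∈ K})
          - sInf (ψ '' {x ∈ Xbar | A x - b + δ'' ∈ K})|
        ≤ ((M - mlo) / ε') * ‖δ - δ''‖ := by
  set L := (M - mlo) / ε' with hL
  set g : EuclideanSpace ℝ (Fin m) → ℝ :=
    fun δ => sInf (ψ '' {x ∈ Xbar | A x - b + δ ∈ K}) with hg
  have hbdd : ∀ δ : EuclideanSpace ℝ (Fin m),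
      BddBelow (ψ '' {x ∈ Xbar | A x - b + δ ∈ K}) := by
    intro δ
    exact ⟨mlo, by rintro y ⟨x, hx, rfl⟩; exact hψlb x hx.1⟩
  have hdS : ∀ δ ∈ S, Metric.infDist δ S ≤ ε' := by
    intro δ hδ
    rw [Metric.infDist_zero_of_mem hδ]; exact hε'.le
  have hgm : ∀ δ : EuclideanSpace ℝ (Fin m), Metric.infDist δ S ≤ ε' → mlo ≤ g δ := by
    intro δ hδ
    exact le_csInf ((hfeas δ hδ).image ψ) (by rintro y ⟨x, hx, rfl⟩; exact hψlb x hx.1)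
  have key : ∀ δ ∈ S, ∀ δ'' ∈ S, g δ'' - g δ ≤ L * ‖δ - δ''‖ := by
    intro δ hδ δ'' hδ''
    rcases eq_or_ne δ δ'' with rfl | hne
    · simp
    have ht0 : 0 < ‖δ - δ''‖ := by
      rw [norm_pos_iff]; exact sub_ne_zero.2 hne
    set t := ‖δ - δ''‖ with ht
    set l := ε' / (ε' + t) with hl
    have hεt : 0 < ε' + t := by linarith
    have hl0 : 0 < l := div_pos hε' hεt
    have hl1 : l < 1 := (div_lt_one hεt).2 (by linarith)
    have h1l : 0 < 1 - l := by linarith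
    set δe : EuclideanSpace ℝ (Fin m) := δ'' + (ε' / t) • (δ'' - δ) with hδe
    have hde : Metric.infDist δe S ≤ ε' := by
      have hdist : dist δe δ'' = ε' := by
        have h1 : δe - δ'' = (ε' / t) • (δ'' - δ) := by rw [hδe]; abel
        rw [dist_eq_norm, h1, norm_smul, norm_sub_rev, ← ht, Real.norm_eq_abs,
          abs_of_pos (div_pos hε' ht0)]
        field_simp
      calc Metric.infDist δe S ≤ dist δe δ'' := Metric.infDist_le_dist_of_mem hδ''
        _ = ε' := hdist
    have hcoef : (1 - l) * (ε' / t) = l := by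
      rw [hl]; field_simp; ring
    have hcomb : l • δ + (1 - l) • δe = δ'' := by
      rw [hδe, smul_add, smul_smul, hcoef, smul_sub]
      module
    have hmem : ∀ x ∈ {x ∈ Xbar | A x - b + δ ∈ K},
        ∀ xe ∈ {x ∈ Xbar | A x - b + δe ∈ K},
        g δ'' ≤ l * ψ x + (1 - l) * ψ xe := by
      intro x hx xe hxe
      have hy : l • x + (1 - l) • xe ∈ {x ∈ Xbar | A x - b + δ'' ∈ K} := by
        refine ⟨hψconv.1 hx.1 hxe.1 hl0.le h1l.le (by ring), ?_⟩
        have heq : A (l • x + (1 - l) • xe) - b + δ'' =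
            l • (A x - b + δ) + (1 - l) • (A xe - b + δe) := by
          rw [map_add, map_smul, map_smul, ← hcomb]
          module
        rw [heq]
        exact K.add_mem (K.smul_mem hl0 hx.2) (K.smul_mem h1l hxe.2)
      calc g δ'' ≤ ψ (l • x + (1 - l) • xe) := csInf_le (hbdd δ'') ⟨_, hy, rfl⟩
        _ ≤ l * ψ x + (1 - l) * ψ xe :=
            hψconv.2 hx.1 hxe.1 hl0.le h1l.le (by ring)
    have h2 : ∀ xe ∈ {x ∈ Xbar | A x - b + δe ∈ K},
        g δ'' ≤ l * g δ + (1 - l) * ψ xe := by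
      intro xe hxe
      have hdiv : (g δ'' - (1 - l) * ψ xe) / l ≤ g δ := by
        apply le_csInf ((hfeas δ (hdS δ hδ)).image ψ)
        rintro y ⟨x, hx, rfl⟩
        rw [div_le_iff₀ hl0]
        have := hmem x hx xe hxe
        nlinarith
      rw [div_le_iff₀ hl0] at hdiv
      nlinarith
    have h3 : g δ'' ≤ l * g δ + (1 - l) * g δe := by
      have hdiv : (g δ'' - l * g δ) / (1 - l) ≤ g δe := by
        apply le_csInf ((hfeas δe hde).image ψ)
        rintro y ⟨xe, hxe, rfl⟩
        rw [div_le_iff₀ h1l]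
        have := h2 xe hxe
        nlinarith
      rw [div_le_iff₀ h1l] at hdiv
      nlinarith
    have hgδ : mlo ≤ g δ := hgm δ (hdS δ hδ)
    have hge : g δe ≤ M := hub δe hde
    have hMm : mlo ≤ M := le_trans hgδ (hub δ (hdS δ hδ))
    have h4 : g δ'' - g δ ≤ (1 - l) * (M - mlo) := by nlinarith
    have h5 : 1 - l = t / (ε' + t) := by
      rw [hl]; field_simp; ring
    have h6 : t / (ε' + t) ≤ t / ε' := by
      gcongr
      linarith
    calc g δ'' - g δ ≤ (1 - l) * (M - mlo) := h4
      _ ≤ (t / ε') * (M - mlo) := by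
          rw [h5]
          exact mul_le_mul_of_nonneg_right h6 (by linarith)
      _ = L * t := by rw [hL]; ring
  intro δ hδ δ'' hδ''
  rw [abs_sub_le_iff]
  constructor
  · have h := key δ'' hδ'' δ hδ
    rwa [norm_sub_rev] at h
  · exact key δ hδ δ'' hδ''
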